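/- arXiv:2012.05881 — 2 statements merged into one kernel-verified Lean document; each statement's English description precedes it below -/
import Mathlib

section
/- Let r > 0 and let A, B ∈ ℂ with ‖A‖ = ‖B‖ = r and A ≠ B (two points of the circle of radius r centered at the origin). Let P = A + t·(B − A) and Q = A + s·(B − A) for real numbers t, s (so A, B, P, Q are collinear), and suppose the quadruple is harmonic, i.e. (P − A)·(Q − B) = −(P − B)·(Q − A). Then Re(conj(P)·Q) = r², i.e. Q lies on the polar line of P with respect to the circle. Hence the locus of the harmonic conjugates of P with respect to the intersections of the secants through P with a circle is the polar of P. -/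
theorem harmonic_conjugate_on_polar (r : ℝ) (hr : 0 < r) (A B : ℂ)
    (hA : ‖A‖ = r) (hB : ‖B‖ = r) (hAB : A ≠ B) (t s : ℝ)
    (P Q : ℂ) (hP : P = A + (t : ℂ) * (B - A)) (hQ : Q = A + (s : ℂ) * (B - A))
    (hharm : (P - A) * (Q - B) = -((P - B) * (Q - A))) :
    ((starRingEnd ℂ) P * Q).re = r ^ 2 := by
  subst hP hQ
  have hD : B - A ≠ 0 := sub_ne_zero.mpr (Ne.symm hAB)
  have h1 : (((t : ℂ) * (s - 1) + (t - 1) * s)) * (B - A) ^ 2 = 0 := by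
    linear_combination hharm
  have h2 : ((t : ℂ) * (s - 1) + (t - 1) * s) = 0 := by
    rcases mul_eq_zero.mp h1 with h | h
    · exact h
    · exact absurd (pow_eq_zero_iff two_ne_zero |>.mp h) hD
  have h3 : t * (s - 1) + (t - 1) * s = 0 := by
    have := congrArg Complex.re h2
    simpa using this
  have hA2 : Complex.normSq A = r ^ 2 := by
    rw [← Complex.sq_norm, hA]
  have hB2 : Complex.normSq B = r ^ 2 := by
    rw [← Complex.sq_norm, hB]
  rw [Complex.normSq_apply] at hA2 hB2
  simp only [Complex.mul_re, Complex.add_re, Complex.add_im, Complex.sub_re, Complex.sub_im,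
    Complex.mul_im, Complex.conj_re, Complex.conj_im, Complex.ofReal_re, Complex.ofReal_im]
  linear_combination (1 - (t + s) / 2) * hA2 + ((t + s) / 2) * hB2 +
    (((B.re - A.re) ^ 2 + (B.im - A.im) ^ 2) / 2) * h3
end

section
/- Let K be a field and let f ∈ K[X, Y, Z] be a nonzero polynomial, homogeneous of degree n, and let t = n − deg_X(f), where deg_X(f) is the highest power of X occurring in f (t is the multiplicity of the plane curve f = 0 at the coordinate point (1 : 0 : 0)). Then X^t divides σ(f) = f(Y·Z, X·Z, X·Y) but X^{t+1} does not divide σ(f). Hence, subtracting the analogous contributions of the three coordinate points, the strict transform under the standard quadratic Cremona transformation of a curve of degree n with multiplicities t_A, t_B, t_C at the three fundamental points has degree 2n − t_A − t_B − t_C. -/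
open MvPolynomial

/-- The standard quadratic Cremona substitution `X ↦ Y·Z, Y ↦ X·Z, Z ↦ X·Y`. -/
noncomputable def cremona {K : Type*} [Field K]
    (f : MvPolynomial (Fin 3) K) : MvPolynomial (Fin 3) K :=
  aeval ![X 1 * X 2, X 0 * X 2, X 0 * X 1] f

/-- the induced map on exponents -/
noncomputable def cremonaTau (s : Fin 3 →₀ ℕ) : Fin 3 →₀ ℕ :=
  Finsupp.equivFunOnFinite.symm ![s 1 + s 2, s 0 + s 2, s 0 + s 1]

lemma cremonaTau_apply0 (s : Fin 3 →₀ ℕ) : cremonaTau s 0 = s 1 + s 2 := rfl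
lemma cremonaTau_apply1 (s : Fin 3 →₀ ℕ) : cremonaTau s 1 = s 0 + s 2 := rfl
lemma cremonaTau_apply2 (s : Fin 3 →₀ ℕ) : cremonaTau s 2 = s 0 + s 1 := rfl

lemma cremonaTau_injective : Function.Injective cremonaTau := by
  intro s t h
  have h0 := congrArg (fun u => u 0) h
  have h1 := congrArg (fun u => u 1) h
  have h2 := congrArg (fun u => u 2) h
  simp only [cremonaTau_apply0, cremonaTau_apply1, cremonaTau_apply2] at h0 h1 h2
  ext i
  fin_cases i
  · exact (show s 0 = t 0 by omega)
  · exact (show s 1 = t 1 by omega)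
  · exact (show s 2 = t 2 by omega)

lemma cremona_monomial {K : Type*} [Field K] (s : Fin 3 →₀ ℕ) (c : K) :
    cremona (monomial s c) = monomial (cremonaTau s) c := by
  rw [cremona, aeval_monomial, monomial_eq]
  rw [Finsupp.prod_pow, Finsupp.prod_pow, Fin.prod_univ_three, Fin.prod_univ_three]
  simp only [Matrix.cons_val_zero, Matrix.cons_val_one, Matrix.head_cons, Matrix.cons_val_two,
    Matrix.tail_cons, cremonaTau_apply0, cremonaTau_apply1, cremonaTau_apply2,
    algebraMap_eq]
  ring

lemma degree_fin3 (s : Fin 3 →₀ ℕ) : s.degree = s 0 + s 1 + s 2 := by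
  rw [Finsupp.degree_apply]
  rw [Finset.sum_subset (Finset.subset_univ s.support)
    (fun i _ hi => Finsupp.notMem_support_iff.mp hi)]
  rw [Fin.sum_univ_three]

theorem cremona_strict_transform_multiplicity {K : Type*} [Field K] (n : ℕ)
    (f : MvPolynomial (Fin 3) K) (hf0 : f ≠ 0) (hf : f.IsHomogeneous n) :
    X 0 ^ (n - f.degreeOf 0) ∣ cremona f ∧
      ¬ X 0 ^ (n - f.degreeOf 0 + 1) ∣ cremona f := by
  set t := n - f.degreeOf 0 with ht
  -- every exponent in the support has degree n
  have hdeg : ∀ s ∈ f.support, s 0 + s 1 + s 2 = n := by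
    intro s hs
    have := hf (mem_support_iff.mp hs)
    change (Finsupp.weight fun _ => 1) s = n at this
    rw [← Finsupp.degree_eq_weight_one, degree_fin3] at this
    exact this
  have hle : ∀ s ∈ f.support, s 0 ≤ f.degreeOf 0 := by
    intro s hs
    rw [degreeOf_eq_sup]
    exact Finset.le_sup (f := fun m => m 0) hs
  -- f as a sum of monomials
  have hsum : cremona f = ∑ s ∈ f.support, monomial (cremonaTau s) (coeff s f) := by
    conv_lhs => rw [f.as_sum]
    rw [cremona, map_sum]
    exact Finset.sum_congr rfl fun s _ => cremona_monomial s _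
  constructor
  · rw [hsum]
    apply Finset.dvd_sum
    intro s hs
    have h1 : t ≤ cremonaTau s 0 := by
      rw [cremonaTau_apply0]
      have := hdeg s hs
      have := hle s hs
      omega
    refine ⟨monomial (cremonaTau s - Finsupp.single 0 t) (coeff s f), ?_⟩
    rw [X_pow_eq_monomial, monomial_mul, one_mul,
      add_tsub_cancel_of_le (Finsupp.single_le_iff.mpr h1)]
  · -- there is a monomial with s 0 = degreeOf 0 f
    rintro ⟨g, hg⟩
    have hne : f.support.Nonempty := support_nonempty.mpr hf0
    obtain ⟨s, hs, hs0⟩ := Finset.exists_mem_eq_sup f.support hne (fun m => m 0)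
    rw [degreeOf_eq_sup] at ht
    -- coefficient of cremonaTau s in cremona f equals coeff s f ≠ 0
    have hcoeff : coeff (cremonaTau s) (cremona f) = coeff s f := by
      rw [hsum, coeff_sum]
      rw [Finset.sum_eq_single s (fun b _ hb => by
        rw [coeff_monomial, if_neg (fun h => hb (cremonaTau_injective h))])
        (fun h => absurd hs h)]
      rw [coeff_monomial, if_pos rfl]
    have htau0 : cremonaTau s 0 = t := by
      rw [cremonaTau_apply0]
      have := hdeg s hs
      have h2 : s 0 ≤ n := by omega
      omega
    have : coeff (cremonaTau s) (cremona f) = 0 := by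
      rw [hg, X_pow_eq_monomial, coeff_monomial_mul']
      rw [if_neg]
      rw [Finsupp.single_le_iff, htau0]
      omega
    rw [hcoeff] at this
    exact (mem_support_iff.mp hs) this
end
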